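/- arXiv:1803.00495 — 3 statements merged into one kernel-verified Lean document; each statement's English description precedes it below -/
import Mathlib

section
/- Let q ≥ 3 be an integer and let a be a complex number with real part Re(a) ≥ 1. The function s ↦ Σ_{p | q} (log p)/(p^{s+a} − 1), where p runs over the prime divisors of q, is analytic on the disc |s| < 1/2, and for every integer n ≥ 0 its n-th Taylor coefficient F_{n,a} at the origin satisfies |F_{n,a}| ≤ A_n (log q)² / log log q, where A_n > 0 depends only on n. -/
open Complex

/-- Lower bound on the denominator. -/
lemma aux_denom {p : ℕ} (hp : 2 ≤ p) {z : ℂ} (hz : (1/2 : ℝ) ≤ z.re) :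
    (2/5 : ℝ) ≤ ‖(p : ℂ) ^ z - 1‖ := by
  have hnorm : ‖(p : ℂ) ^ z‖ = (p : ℝ) ^ z.re := by
    rw [← Complex.ofReal_natCast,
      Complex.norm_cpow_eq_rpow_re_of_pos (by positivity)]
  have h1 : (2 : ℝ) ^ (1/2 : ℝ) ≤ (p : ℝ) ^ z.re := by
    calc (2 : ℝ) ^ (1/2 : ℝ) ≤ (p : ℝ) ^ (1/2 : ℝ) :=
          Real.rpow_le_rpow (by norm_num) (by exact_mod_cast hp) (by norm_num)
      _ ≤ (p : ℝ) ^ z.re :=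
          Real.rpow_le_rpow_of_exponent_le (by exact_mod_cast hp.trans' (by norm_num)) hz
  have h2 : (7/5 : ℝ) ≤ (2 : ℝ) ^ (1/2 : ℝ) := by
    rw [← Real.sqrt_eq_rpow]
    rw [show (7/5 : ℝ) = Real.sqrt ((7/5)^2) by rw [Real.sqrt_sq]; norm_num]
    exact Real.sqrt_le_sqrt (by norm_num)
  have h3 := norm_sub_norm_le ((p : ℂ) ^ z) 1
  simp only [norm_one] at h3
  rw [hnorm] at h3
  linarith

lemma aux_denom_ne {p : ℕ} (hp : 2 ≤ p) {z : ℂ} (hz : (1/2 : ℝ) ≤ z.re) :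
    (p : ℂ) ^ z - 1 ≠ 0 := by
  intro h
  have := aux_denom hp hz
  rw [h, norm_zero] at this
  norm_num at this

/-- Cauchy estimate. -/
lemma aux_cauchy {f : ℂ → ℂ} {R M : ℝ} (hR : 0 < R)
    (hf : DifferentiableOn ℂ f (Metric.closedBall 0 R))
    (hb : ∀ z ∈ Metric.closedBall (0 : ℂ) R, ‖f z‖ ≤ M) (n : ℕ) :
    ‖iteratedDeriv n f 0 / (n.factorial : ℂ)‖ ≤ M / R ^ n := by
  have hM : 0 ≤ M := le_trans (norm_nonneg _) (hb 0 (by simp [hR.le]))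
  set R' : NNReal := ⟨R, hR.le⟩ with hR'
  have hcoe : (R' : ℝ) = R := rfl
  have h : HasFPowerSeriesOnBall f (cauchyPowerSeries f 0 R') 0 R' :=
    hf.hasFPowerSeriesOnBall (by exact_mod_cast hR)
  have key : (n.factorial : ℂ) • (cauchyPowerSeries f 0 R' n fun _ => (1 : ℂ))
      = iteratedDeriv n f 0 := by
    rw [iteratedDeriv_eq_iteratedFDeriv, ← h.factorial_smul (y := (1 : ℂ)) n]
    simp [nsmul_eq_mul]
  have hne : (n.factorial : ℂ) ≠ 0 := by exact_mod_cast n.factorial_ne_zero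
  have heq : iteratedDeriv n f 0 / (n.factorial : ℂ)
      = cauchyPowerSeries f 0 R' n fun _ => (1 : ℂ) := by
    rw [← key, smul_eq_mul]; field_simp
  rw [heq]
  have h1 : ‖cauchyPowerSeries f 0 R' n fun _ => (1 : ℂ)‖ ≤ ‖cauchyPowerSeries f 0 R' n‖ := by
    refine le_trans ((cauchyPowerSeries f 0 R' n).le_opNorm _) ?_
    simp
  refine h1.trans ?_
  refine le_trans (norm_cauchyPowerSeries_le f 0 R' n) ?_
  have hint : (∫ θ : ℝ in (0)..2 * Real.pi, ‖f (circleMap 0 R' θ)‖) ≤ 2 * Real.pi * M := by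
    have hcont : ContinuousOn (fun θ : ℝ => ‖f (circleMap 0 R' θ)‖) (Set.Icc 0 (2 * Real.pi)) := by
      refine ContinuousOn.norm ?_
      refine hf.continuousOn.comp (continuous_circleMap 0 R').continuousOn ?_
      intro θ _
      have := circleMap_mem_sphere (0 : ℂ) (by exact_mod_cast hR.le : 0 ≤ (R' : ℝ)) θ
      exact Metric.sphere_subset_closedBall this
    calc (∫ θ : ℝ in (0)..2 * Real.pi, ‖f (circleMap 0 R' θ)‖)
        ≤ ∫ _ : ℝ in (0)..2 * Real.pi, M := by
          refine intervalIntegral.integral_mono_on Real.two_pi_pos.le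
            (hcont.intervalIntegrable_of_Icc Real.two_pi_pos.le)
            intervalIntegrable_const ?_
          intro θ _
          refine hb _ ?_
          have := circleMap_mem_sphere (0 : ℂ) (by exact_mod_cast hR.le : 0 ≤ (R' : ℝ)) θ
          exact Metric.sphere_subset_closedBall this
      _ = 2 * Real.pi * M := by simp [mul_comm]
  have habs : |(R' : ℝ)| = R := by rw [hcoe, abs_of_pos hR]
  calc ((2 * Real.pi)⁻¹ * ∫ θ : ℝ in (0)..2 * Real.pi, ‖f (circleMap 0 R' θ)‖) * |(R' : ℝ)|⁻¹ ^ n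
      ≤ ((2 * Real.pi)⁻¹ * (2 * Real.pi * M)) * |(R' : ℝ)|⁻¹ ^ n := by
        refine mul_le_mul_of_nonneg_right (mul_le_mul_of_nonneg_left hint (by positivity)) ?_
        positivity
    _ = M / R ^ n := by
        rw [habs]
        rw [inv_mul_cancel_left₀ (by positivity : (2 * Real.pi) ≠ 0)]
        rw [inv_pow, div_eq_mul_inv]

/-- For an integer `q ≥ 3` and `a : ℂ` with `Re a ≥ 1`, the function
`s ↦ Σ_{p | q} (log p)/(p^{s+a} − 1)` (the sum over the distinct prime divisors of `q`) is
analytic on the disc `|s| < 1/2`, and for every `n ≥ 0` its `n`-th Taylor coefficient `F_{n,a}`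
at `0` satisfies `|F_{n,a}| ≤ A_n (log q)²/log log q`, with `A_n > 0` depending only on `n`. -/
theorem stmt_8 (n : ℕ) :
    ∃ A : ℝ, 0 < A ∧ ∀ q : ℕ, 3 ≤ q → ∀ a : ℂ, 1 ≤ a.re →
      (∀ s ∈ Metric.ball (0 : ℂ) (1 / 2),
        AnalyticAt ℂ (fun s : ℂ => ∑ p ∈ q.primeFactors,
          (Real.log p : ℂ) / ((p : ℂ) ^ (s + a) - 1)) s) ∧
      ‖iteratedDeriv n (fun s : ℂ => ∑ p ∈ q.primeFactors,
            (Real.log p : ℂ) / ((p : ℂ) ^ (s + a) - 1)) 0 / (n.factorial : ℂ)‖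
        ≤ A * (Real.log q) ^ 2 / Real.log (Real.log q) := by
  refine ⟨3 * 4 ^ n, by positivity, ?_⟩
  intro q hq a ha
  set f : ℂ → ℂ := fun s : ℂ => ∑ p ∈ q.primeFactors,
    (Real.log p : ℂ) / ((p : ℂ) ^ (s + a) - 1) with hfdef
  have hq0 : 0 < q := by omega
  have hlogq : 1 < Real.log q := by
    have h3 : Real.exp 1 < 3 := by
      have := Real.exp_one_lt_d9; linarith
    have : Real.exp 1 < (q : ℝ) := h3.trans_le (by exact_mod_cast hq)
    calc (1 : ℝ) = Real.log (Real.exp 1) := (Real.log_exp 1).symm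
      _ < Real.log q := Real.log_lt_log (Real.exp_pos 1) this
  have hllq : 0 < Real.log (Real.log q) := Real.log_pos hlogq
  have hdiff : ∀ s : ℂ, -(1/2 : ℝ) < s.re → DifferentiableAt ℂ f s := by
    intro s hs
    refine DifferentiableAt.fun_sum fun p hp => ?_
    have hp2 : 2 ≤ p := (Nat.prime_of_mem_primeFactors hp).two_le
    have hz : (1/2 : ℝ) ≤ (s + a).re := by
      simp only [Complex.add_re]; linarith
    have hpne : (p : ℂ) ≠ 0 := Nat.cast_ne_zero.mpr (by omega)
    refine DifferentiableAt.div (differentiableAt_const _) ?_ (aux_denom_ne hp2 hz)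
    exact DifferentiableAt.sub_const
      ((differentiableAt_id.add_const a).const_cpow (Or.inl hpne)) 1
  constructor
  · intro s hs
    rw [analyticAt_iff_eventually_differentiableAt]
    have hopen : IsOpen {z : ℂ | -(1/2 : ℝ) < z.re} :=
      isOpen_lt continuous_const Complex.continuous_re
    have hmem : s ∈ {z : ℂ | -(1/2 : ℝ) < z.re} := by
      have h1 : ‖s‖ < 1/2 := by simpa using Metric.mem_ball.mp hs
      have h2 := abs_lt.mp ((Complex.abs_re_le_norm s).trans_lt h1)
      simp only [Set.mem_setOf_eq]
      linarith [h2.1]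
    filter_upwards [hopen.mem_nhds hmem] with z hz using hdiff z hz
  · have hbound : ‖iteratedDeriv n f 0 / (n.factorial : ℂ)‖
        ≤ (3 * Real.log q) / (1/4 : ℝ) ^ n := by
      refine aux_cauchy (by norm_num) ?_ ?_ n
      · intro z hz
        refine (hdiff z ?_).differentiableWithinAt
        have h1 : ‖z‖ ≤ 1/4 := by simpa using Metric.mem_closedBall.mp hz
        have h2 := abs_le.mp ((Complex.abs_re_le_norm z).trans h1)
        linarith [h2.1]
      · intro z hz
        have h1 : ‖z‖ ≤ 1/4 := by simpa using Metric.mem_closedBall.mp hz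
        have h2 := abs_le.mp ((Complex.abs_re_le_norm z).trans h1)
        have hzre : (1/2 : ℝ) ≤ (z + a).re := by
          simp only [Complex.add_re]; linarith [h2.1]
        calc ‖f z‖ ≤ ∑ p ∈ q.primeFactors,
              ‖(Real.log p : ℂ) / ((p : ℂ) ^ (z + a) - 1)‖ := norm_sum_le _ _
          _ ≤ ∑ p ∈ q.primeFactors, (5/2 : ℝ) * Real.log p := by
              refine Finset.sum_le_sum fun p hp => ?_
              have hp2 : 2 ≤ p := (Nat.prime_of_mem_primeFactors hp).two_le
              have hlp : 0 ≤ Real.log p :=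
                Real.log_nonneg (by exact_mod_cast hp2.trans' (by norm_num))
              rw [norm_div]
              have hd := aux_denom hp2 hzre
              have hnn : ‖((Real.log p : ℝ) : ℂ)‖ = Real.log p := by
                rw [Complex.norm_real, Real.norm_eq_abs, _root_.abs_of_nonneg hlp]
              rw [hnn]
              rw [div_le_iff₀ (by linarith : (0:ℝ) < ‖(p : ℂ) ^ (z + a) - 1‖)]
              nlinarith
          _ = (5/2 : ℝ) * ∑ p ∈ q.primeFactors, Real.log p := by
              rw [Finset.mul_sum]
          _ ≤ 3 * Real.log q := by
              have hsum : ∑ p ∈ q.primeFactors, Real.log (p : ℝ) ≤ Real.log q := by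
                have h1 : ∑ p ∈ q.primeFactors, Real.log (p : ℝ)
                    = Real.log (∏ p ∈ q.primeFactors, (p : ℝ)) := by
                  rw [Real.log_prod]
                  intro p hp
                  exact_mod_cast (Nat.prime_of_mem_primeFactors hp).pos.ne'
                rw [h1]
                have h2 : (∏ p ∈ q.primeFactors, (p : ℝ))
                    = ((∏ p ∈ q.primeFactors, p : ℕ) : ℝ) := by push_cast; ring
                rw [h2]
                have hpos : 0 < (∏ p ∈ q.primeFactors, p : ℕ) :=
                  Finset.prod_pos fun p hp => (Nat.prime_of_mem_primeFactors hp).pos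
                refine Real.log_le_log (by exact_mod_cast hpos) ?_
                exact_mod_cast Nat.le_of_dvd hq0 (Nat.prod_primeFactors_dvd q)
              nlinarith
    refine hbound.trans ?_
    have h1 : (3 * Real.log q) / (1/4 : ℝ) ^ n = 3 * 4 ^ n * Real.log q := by
      rw [div_pow, one_pow, div_div_eq_mul_div, div_one]
      ring
    rw [h1, le_div_iff₀ hllq]
    have hlog_le : Real.log (Real.log q) ≤ Real.log q :=
      Real.log_le_self (by positivity)
    have h4 : (0:ℝ) < 4 ^ n := by positivity
    have key : Real.log q * Real.log (Real.log q) ≤ Real.log q ^ 2 := by nlinarith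
    nlinarith [mul_le_mul_of_nonneg_left key h4.le]
end

section
/- Let q ≥ 3 be an integer, let χ_1 be a non-principal real Dirichlet character modulo q, and let β_1 be a real simple zero of L(s, χ_1). Let A > 0 and let c_2 > 0 be such that L(s, χ_1) has no zero other than β_1 in the disc |s − β_1| ≤ c_2/log(2q) and such that |L'(s, χ_1)/L(s, χ_1) − 1/(s − β_1)| ≤ A·log(2q) for all s on the circle |s − β_1| = c_2/log(2q). Then L'(s+β_1, χ_1)/L(s+β_1, χ_1) = 1/s + Σ_{n≥0} P_n s^n for |s| < c_2/log(2q), and the coefficients satisfy |P_n| ≤ B_n (log q)^{n+1} for every n ≥ 0, where B_n > 0 depends only on n, A and c_2. -/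
open Complex DirichletCharacter

/-- Let `A, c₂ > 0`. There are constants `B_n > 0`, depending only on `n`, `A` and `c₂`, with
the following property. Let `q ≥ 3`, let `χ₁` be a non-principal real Dirichlet character mod
`q`, and let `β₁` be a real simple zero of `L(s,χ₁)`. Assume `L(s,χ₁)` has no zero other than
`β₁` in the disc `|s − β₁| ≤ c₂/log(2q)` and `|L'/L(s,χ₁) − 1/(s−β₁)| ≤ A log(2q)` on the
circle `|s − β₁| = c₂/log(2q)`. Then `L'/L(s+β₁,χ₁) = 1/s + Σ_{n≥0} P_n sⁿ` for
`0 < |s| < c₂/log(2q)`, with `|P_n| ≤ B_n (log q)^{n+1}` for every `n`. -/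
theorem stmt_9 (A c₂ : ℝ) (hA : 0 < A) (hc₂ : 0 < c₂) :
    ∃ B : ℕ → ℝ, (∀ n, 0 < B n) ∧
      ∀ (q : ℕ) [NeZero q], 3 ≤ q →
        ∀ χ₁ : DirichletCharacter ℂ q, χ₁ ≠ 1 → (∀ x : ZMod q, (χ₁ x).im = 0) →
          ∀ β₁ : ℝ,
            LFunction χ₁ (β₁ : ℂ) = 0 → deriv (LFunction χ₁) (β₁ : ℂ) ≠ 0 →
            (∀ s : ℂ, ‖s - (β₁ : ℂ)‖ ≤ c₂ / Real.log (2 * q) → LFunction χ₁ s = 0 →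
              s = (β₁ : ℂ)) →
            (∀ s : ℂ, ‖s - (β₁ : ℂ)‖ = c₂ / Real.log (2 * q) →
              ‖deriv (LFunction χ₁) s / LFunction χ₁ s - 1 / (s - (β₁ : ℂ))‖
                ≤ A * Real.log (2 * q)) →
            ∃ P : ℕ → ℂ,
              (∀ s : ℂ, s ≠ 0 → ‖s‖ < c₂ / Real.log (2 * q) →
                HasSum (fun n : ℕ => P n * s ^ n)
                  (deriv (LFunction χ₁) (s + β₁) / LFunction χ₁ (s + β₁) - 1 / s)) ∧
              ∀ n : ℕ, ‖P n‖ ≤ B n * (Real.log q) ^ (n + 1) := by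
  refine ⟨fun n => A * 2 ^ (n + 1) / c₂ ^ n, fun n => by positivity, ?_⟩
  intro q _ hq3 χ₁ hχ _ β₁ hzero hsimple hnozero hcirc
  set L : ℂ → ℂ := LFunction χ₁ with hLdef
  have hL : Differentiable ℂ L := differentiable_LFunction hχ
  -- basic numerology
  have hq3' : (3 : ℝ) ≤ (q : ℝ) := by exact_mod_cast hq3
  have hq1 : (1 : ℝ) < (q : ℝ) := by linarith
  have hlogq : 0 < Real.log q := Real.log_pos hq1
  have hLq : 0 < Real.log (2 * q) := Real.log_pos (by nlinarith)
  have hLqle : Real.log (2 * (q : ℝ)) ≤ 2 * Real.log q := by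
    rw [Real.log_mul two_ne_zero (by positivity)]
    have h2 : Real.log 2 ≤ Real.log q := Real.log_le_log (by norm_num) (by linarith)
    linarith
  set r : ℝ := c₂ / Real.log (2 * q) with hrdef
  have hr : 0 < r := by positivity
  -- the dslope function
  set h : ℂ → ℂ := dslope L (β₁ : ℂ) with hhdef
  have hha : AnalyticAt ℂ h (β₁ : ℂ) := by
    obtain ⟨p, hp⟩ := (hL.analyticAt (β₁ : ℂ))
    exact hp.has_fpower_series_dslope_fslope.analyticAt
  have hhval : h (β₁ : ℂ) = deriv L (β₁ : ℂ) := dslope_same L _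
  have hhne : h (β₁ : ℂ) ≠ 0 := by rw [hhval]; exact hsimple
  have hfac : ∀ s : ℂ, L s = (s - (β₁ : ℂ)) * h s := by
    intro s
    have := sub_smul_dslope L (β₁ : ℂ) s
    rw [smul_eq_mul] at this
    rw [← hhdef] at this
    rw [this, hzero, sub_zero]
  -- the regularized function
  set G : ℂ → ℂ :=
    Function.update (fun s => deriv L s / L s - 1 / (s - (β₁ : ℂ))) (β₁ : ℂ)
      (deriv h (β₁ : ℂ) / h (β₁ : ℂ)) with hGdef
  have hGne : ∀ s : ℂ, s ≠ (β₁ : ℂ) →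
      G s = deriv L s / L s - 1 / (s - (β₁ : ℂ)) := by
    intro s hs; simp only [hGdef, Function.update_of_ne hs]
  -- G agrees with deriv h / h near β₁
  have hGev : G =ᶠ[nhds (β₁ : ℂ)] fun s => deriv h s / h s := by
    obtain ⟨U, hU, hUa⟩ := hha.exists_mem_nhds_analyticOnNhd
    obtain ⟨V, hVU, hVo, hVmem⟩ := mem_nhds_iff.mp hU
    have hcont : ContinuousAt h (β₁ : ℂ) := hha.continuousAt
    have hne : ∀ᶠ s in nhds (β₁ : ℂ), h s ≠ 0 :=
      hcont.eventually_ne hhne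
    filter_upwards [hne, hVo.mem_nhds hVmem] with s hs hsV
    rcases eq_or_ne s (β₁ : ℂ) with rfl | hsne
    · simp [hGdef]
    · rw [hGne s hsne]
      have hdh : DifferentiableAt ℂ h s := (hUa s (hVU hsV)).differentiableAt
      have hderivL : deriv L s = h s + (s - (β₁ : ℂ)) * deriv h s := by
        have hL' : L = fun z => (z - (β₁ : ℂ)) * h z := funext hfac
        rw [hL']
        have : HasDerivAt (fun z => (z - (β₁ : ℂ)) * h z)
            (1 * h s + (s - (β₁ : ℂ)) * deriv h s) s :=
          ((hasDerivAt_id s).sub_const _).mul hdh.hasDerivAt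
        rw [this.deriv]; ring
      rw [hderivL, hfac s]
      have h1 : s - (β₁ : ℂ) ≠ 0 := sub_ne_zero.mpr hsne
      field_simp
      ring
  have hGanal : AnalyticAt ℂ G (β₁ : ℂ) := by
    obtain ⟨U, hU, hUa⟩ := hha.exists_mem_nhds_analyticOnNhd
    obtain ⟨V, hVU, hVo, hVmem⟩ := mem_nhds_iff.mp hU
    have hderiv : AnalyticAt ℂ (deriv h) (β₁ : ℂ) :=
      hUa.deriv _ (mem_of_mem_nhds hU)
    exact (hderiv.div hha hhne).congr hGev.symm
  -- G is differentiable on the closed ball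
  have hGdiff : DifferentiableOn ℂ G (Metric.closedBall (β₁ : ℂ) r) := by
    intro s hs
    rcases eq_or_ne s (β₁ : ℂ) with rfl | hsne
    · exact hGanal.differentiableAt.differentiableWithinAt
    · have hLs : L s ≠ 0 := by
        intro h0
        exact hsne (hnozero s (by
          rw [Metric.mem_closedBall, dist_eq_norm] at hs; exact hs) h0)
      have hg : DifferentiableAt ℂ
          (fun z => deriv L z / L z - 1 / (z - (β₁ : ℂ))) s := by
        have h1 : DifferentiableAt ℂ (deriv L) s :=
          ((analyticOnNhd_univ_iff_differentiable.mpr hL).deriv s trivial).differentiableAt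
        have h2 : DifferentiableAt ℂ (fun z => deriv L z / L z) s :=
          h1.div (hL.differentiableAt) hLs
        have h3 : DifferentiableAt ℂ (fun z => 1 / (z - (β₁ : ℂ))) s :=
          (differentiableAt_const 1).div
            (differentiableAt_id.sub (differentiableAt_const _))
            (sub_ne_zero.mpr hsne)
        exact h2.sub h3
      have hev : (fun z => deriv L z / L z - 1 / (z - (β₁ : ℂ))) =ᶠ[nhds s] G := by
        filter_upwards [isOpen_ne.mem_nhds hsne] with z hz
        exact (hGne z hz).symm
      exact (hg.congr_of_eventuallyEq hev.symm).differentiableWithinAt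
  -- power series
  set R : NNReal := r.toNNReal with hRdef
  have hRr : (R : ℝ) = r := Real.coe_toNNReal r hr.le
  have hRpos : 0 < R := Real.toNNReal_pos.mpr hr
  have hball : HasFPowerSeriesOnBall G (cauchyPowerSeries G (β₁ : ℂ) R) (β₁ : ℂ) R := by
    refine DifferentiableOn.hasFPowerSeriesOnBall ?_ hRpos
    rwa [hRr]
  set p := cauchyPowerSeries G (β₁ : ℂ) (R : ℝ) with hpdef
  refine ⟨fun n => p.coeff n, ?_, ?_⟩
  · -- HasSum
    intro s hs0 hsr
    have hmem : s ∈ Metric.eball (0 : ℂ) (R : ENNReal) := by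
      rw [Metric.mem_eball, edist_zero_right, ← hRr] at *
      exact_mod_cast (by rwa [hRr] : ‖s‖ < (R : ℝ))
    have hsum := hball.hasSum hmem
    have heq : G ((β₁ : ℂ) + s)
        = deriv L (s + β₁) / L (s + β₁) - 1 / s := by
      have hne' : (β₁ : ℂ) + s ≠ (β₁ : ℂ) := by
        intro hcon; apply hs0; linear_combination hcon
      rw [hGne _ hne']
      congr 1 <;> [skip; skip] <;> ring_nf
    rw [heq] at hsum
    convert hsum using 2 with n
    · rfl
    rw [p.apply_eq_pow_smul_coeff, smul_eq_mul]; ring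
  · -- bounds
    intro n
    have hcoeff : ‖p.coeff n‖ = ‖p n‖ := (p.norm_apply_eq_norm_coef).symm
    have hbound := norm_cauchyPowerSeries_le G (β₁ : ℂ) (R : ℝ) n
    rw [hRr] at hbound
    -- bound the integral
    have hGcont : Continuous fun θ : ℝ => ‖G (circleMap (β₁ : ℂ) r θ)‖ := by
      have h1 : ContinuousOn G (Metric.closedBall (β₁ : ℂ) r) := hGdiff.continuousOn
      have h2 : Continuous fun θ : ℝ => circleMap (β₁ : ℂ) r θ := continuous_circleMap _ _
      exact (h1.comp_continuous h2 fun θ => by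
        simp [Metric.mem_closedBall, dist_eq_norm, circleMap_sub_center,
          abs_of_pos hr, hr.le]).norm
    have hint : (∫ θ : ℝ in (0)..2 * Real.pi, ‖G (circleMap (β₁ : ℂ) r θ)‖)
        ≤ 2 * Real.pi * (A * Real.log (2 * q)) := by
      have hle : ∀ θ ∈ Set.Icc (0 : ℝ) (2 * Real.pi),
          ‖G (circleMap (β₁ : ℂ) r θ)‖ ≤ A * Real.log (2 * q) := by
        intro θ _
        have hne' : circleMap (β₁ : ℂ) r θ ≠ (β₁ : ℂ) := circleMap_ne_center hr.ne'
        rw [hGne _ hne']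
        exact hcirc _ (by simp [circleMap_sub_center, abs_of_pos hr])
      calc (∫ θ : ℝ in (0)..2 * Real.pi, ‖G (circleMap (β₁ : ℂ) r θ)‖)
          ≤ ∫ _ : ℝ in (0)..2 * Real.pi, A * Real.log (2 * q) := by
            apply intervalIntegral.integral_mono_on Real.two_pi_pos.le
              (hGcont.intervalIntegrable _ _) (intervalIntegrable_const) hle
        _ = 2 * Real.pi * (A * Real.log (2 * q)) := by
            rw [intervalIntegral.integral_const, smul_eq_mul]; ring
    have hIle : (2 * Real.pi)⁻¹ * (∫ θ : ℝ in (0)..2 * Real.pi,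
        ‖G (circleMap (β₁ : ℂ) r θ)‖) ≤ A * Real.log (2 * q) := by
      have := mul_le_mul_of_nonneg_left hint (by positivity :
        (0:ℝ) ≤ (2 * Real.pi)⁻¹)
      refine this.trans_eq ?_
      field_simp
    have hfinal : ‖p n‖ ≤ A * Real.log (2 * q) * (r⁻¹) ^ n := by
      rw [hpdef, hRr]
      refine hbound.trans ?_
      rw [abs_of_pos hr]
      exact mul_le_mul_of_nonneg_right hIle (by positivity)
    rw [hcoeff]
    refine hfinal.trans ?_
    have hrinv : r⁻¹ = Real.log (2 * q) / c₂ := by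
      rw [hrdef]; field_simp
    rw [hrinv]
    have hkey : A * Real.log (2 * q) * (Real.log (2 * q) / c₂) ^ n
        = A * (Real.log (2 * q)) ^ (n + 1) / c₂ ^ n := by
      rw [div_pow]; ring
    rw [hkey]
    calc A * (Real.log (2 * q)) ^ (n + 1) / c₂ ^ n
        ≤ A * (2 * Real.log q) ^ (n + 1) / c₂ ^ n := by gcongr
      _ = A * 2 ^ (n + 1) / c₂ ^ n * Real.log q ^ (n + 1) := by
          rw [mul_pow]; ring
end

section
/- There is an absolute constant C > 0 such that for every positive integer k, M_k := Σ_{m ≥ 1} Λ_k(m)² / m² ≤ C · (2k)!. -/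
open MeasureTheory Set

/-- `Lam k m` is the `k`-fold Dirichlet convolution of the von Mangoldt function with itself,
evaluated at `m`, i.e. `Λ_k(m) = Σ_{m = m₁⋯m_k} Λ(m₁)⋯Λ(m_k)`. -/
noncomputable def Lam (k m : ℕ) : ℝ := (ArithmeticFunction.vonMangoldt ^ k) m

lemma Lam_nonneg (k m : ℕ) : 0 ≤ Lam k m := by
  induction k generalizing m with
  | zero =>
    rw [Lam, pow_zero, ArithmeticFunction.one_apply]
    split <;> norm_num
  | succ k ih =>
    rw [Lam, pow_succ, ArithmeticFunction.mul_apply]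
    exact Finset.sum_nonneg fun p _ =>
      mul_nonneg (ih p.1) ArithmeticFunction.vonMangoldt_nonneg

lemma Lam_le (k : ℕ) : ∀ m : ℕ, 1 ≤ m → Lam k m ≤ Real.log m ^ k := by
  induction k with
  | zero =>
    intro m hm
    rw [Lam, pow_zero, pow_zero, ArithmeticFunction.one_apply]
    split <;> norm_num
  | succ k ih =>
    intro m hm
    rw [Lam, pow_succ, ArithmeticFunction.mul_apply]
    calc ∑ p ∈ m.divisorsAntidiagonal,
          (ArithmeticFunction.vonMangoldt ^ k) p.1 * ArithmeticFunction.vonMangoldt p.2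
        ≤ ∑ p ∈ m.divisorsAntidiagonal,
            Real.log m ^ k * ArithmeticFunction.vonMangoldt p.2 := by
          refine Finset.sum_le_sum fun p hp => ?_
          obtain ⟨hpm, hm0⟩ := Nat.mem_divisorsAntidiagonal.mp hp
          have hdvd : p.1 ∣ m := Dvd.intro _ hpm
          have hp1 : 1 ≤ p.1 := Nat.pos_of_mem_divisors (Nat.fst_mem_divisors_of_mem_antidiagonal hp)
          have hle : (p.1 : ℝ) ≤ (m : ℝ) := by
            exact_mod_cast Nat.le_of_dvd (Nat.pos_of_ne_zero hm0) hdvd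
          have h1 : Lam k p.1 ≤ Real.log p.1 ^ k := ih p.1 hp1
          have h2 : Real.log p.1 ^ k ≤ Real.log m ^ k := by
            refine pow_le_pow_left₀ (Real.log_nonneg (by exact_mod_cast hp1)) ?_ k
            exact Real.log_le_log (by exact_mod_cast hp1) hle
          exact mul_le_mul_of_nonneg_right (h1.trans h2)
            ArithmeticFunction.vonMangoldt_nonneg
      _ = Real.log m ^ k *
            ∑ p ∈ m.divisorsAntidiagonal, ArithmeticFunction.vonMangoldt p.2 := by
          rw [Finset.mul_sum]
      _ = Real.log m ^ k * Real.log m := by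
          rw [Nat.sum_divisorsAntidiagonal' (f := fun _ y => ArithmeticFunction.vonMangoldt y),
            ArithmeticFunction.vonMangoldt_sum]
      _ = Real.log m ^ (k + 1) := (pow_succ _ _).symm

lemma integrableOn_gamma (n : ℕ) :
    IntegrableOn (fun x : ℝ => Real.exp (-x) * x ^ n) (Ioi 0) := by
  have h := Real.GammaIntegral_convergent (s := (n : ℝ) + 1) (by positivity)
  refine h.congr_fun (fun x hx => ?_) measurableSet_Ioi
  beta_reduce
  rw [show ((n : ℝ) + 1 - 1) = (n : ℝ) by ring, Real.rpow_natCast]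

lemma integral_gamma (n : ℕ) :
    ∫ x in Ioi (0:ℝ), Real.exp (-x) * x ^ n = (n.factorial : ℝ) := by
  rw [← Real.Gamma_nat_eq_factorial, Real.Gamma_eq_integral (by positivity)]
  refine setIntegral_congr_fun measurableSet_Ioi fun x _ => ?_
  rw [show ((n : ℝ) + 1 - 1) = (n : ℝ) by ring, Real.rpow_natCast]

lemma log_sum_bound (n : ℕ) (hn : 1 ≤ n) (s : Finset ℕ) :
    ∑ m ∈ s, Real.log m ^ n / (m : ℝ) ^ 2 ≤ 4 * (n.factorial : ℝ) := by
  set g : ℝ → ℝ := fun x => Real.exp (-x) * x ^ n with hg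
  set I : ℕ → Set ℝ := fun m => Ioc (Real.log m) (Real.log (m + 1)) with hI
  have hIsub : ∀ m : ℕ, 2 ≤ m → I m ⊆ Ioi (0:ℝ) := by
    intro m hm x hx
    have : (0:ℝ) < Real.log m := Real.log_pos (by exact_mod_cast hm)
    exact this.trans hx.1
  -- key pointwise estimate
  have key : ∀ m : ℕ, 2 ≤ m →
      Real.log m ^ n / (m : ℝ) ^ 2 ≤ 4 * ∫ x in I m, g x := by
    intro m hm
    have hm1 : (1:ℝ) ≤ (m:ℝ) := by exact_mod_cast Nat.one_le_of_lt hm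
    have hm0 : (0:ℝ) < (m:ℝ) := by linarith
    have hlogm : 0 < Real.log m := Real.log_pos (by exact_mod_cast hm)
    have hab : Real.log m < Real.log (m + 1) := by
      apply Real.log_lt_log hm0; push_cast; linarith
    set c : ℝ := Real.log m ^ n / ((m : ℝ) + 1) with hc
    have hgc : ∀ x ∈ I m, c ≤ g x := by
      intro x hx
      have hx1 : Real.log m < x := hx.1
      have hx2 : x ≤ Real.log (m + 1) := hx.2
      have h1 : Real.log m ^ n ≤ x ^ n := pow_le_pow_left₀ hlogm.le hx1.le n
      have h2 : (1 : ℝ) / ((m:ℝ) + 1) ≤ Real.exp (-x) := by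
        have hex : Real.exp x ≤ (m:ℝ) + 1 := by
          calc Real.exp x ≤ Real.exp (Real.log ((m:ℝ)+1)) := by
                apply Real.exp_le_exp.mpr; simpa using hx2
            _ = (m:ℝ) + 1 := Real.exp_log (by linarith)
        rw [Real.exp_neg, ← one_div]
        exact one_div_le_one_div_of_le (Real.exp_pos x) hex
      calc c = (1 / ((m:ℝ)+1)) * Real.log m ^ n := by rw [hc]; ring
        _ ≤ Real.exp (-x) * x ^ n := by
            exact mul_le_mul h2 h1 (by positivity) (Real.exp_pos _).le
    have hint : IntegrableOn g (I m) := by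
      exact (integrableOn_gamma n).mono_set (hIsub m hm)
    have hmeas : (volume (I m)).toReal = Real.log (m+1) - Real.log m := by
      rw [hI, Real.volume_Ioc, ENNReal.toReal_ofReal (by linarith)]
    have hlower : c * (Real.log (m+1) - Real.log m) ≤ ∫ x in I m, g x := by
      calc c * (Real.log (m+1) - Real.log m) = ∫ _ in I m, c := by
            rw [setIntegral_const, measureReal_def, hmeas, smul_eq_mul, mul_comm]
        _ ≤ ∫ x in I m, g x :=
            setIntegral_mono_on (integrableOn_const (by
              rw [hI, Real.volume_Ioc]; exact ENNReal.ofReal_ne_top)) hint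
              measurableSet_Ioc hgc
    have hgap : 1 / ((m:ℝ) + 1) ≤ Real.log ((m:ℝ)+1) - Real.log m := by
      have h1 : Real.log ((m:ℝ) / ((m:ℝ)+1)) ≤ (m:ℝ) / ((m:ℝ)+1) - 1 :=
        Real.log_le_sub_one_of_pos (by positivity)
      rw [Real.log_div (by positivity) (by positivity)] at h1
      have h3 : (m:ℝ) / ((m:ℝ)+1) - 1 = -(1 / ((m:ℝ)+1)) := by field_simp; ring
      linarith [h1.trans_eq h3]
    have hsq : ((m:ℝ)+1)^2 ≤ 4 * (m:ℝ)^2 := by nlinarith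
    calc Real.log m ^ n / (m : ℝ) ^ 2
        ≤ 4 * (Real.log m ^ n / ((m:ℝ)+1)^2) := by
          have hA : (0:ℝ) ≤ Real.log m ^ n := by positivity
          rw [show (4:ℝ) * (Real.log m ^ n / ((m:ℝ)+1)^2)
                = (4 * Real.log m ^ n) / (((m:ℝ)+1)^2) by ring,
            div_le_div_iff₀ (by positivity) (by positivity)]
          nlinarith [mul_le_mul_of_nonneg_left hsq hA]
      _ ≤ 4 * (c * (Real.log (m+1) - Real.log m)) := by
          have hc0 : 0 ≤ c := by positivity
          have : Real.log m ^ n / ((m:ℝ)+1)^2 ≤ c * (Real.log (m+1) - Real.log m) := by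
            calc Real.log m ^ n / ((m:ℝ)+1)^2
                = c * (1 / ((m:ℝ)+1)) := by rw [hc]; field_simp
              _ ≤ c * (Real.log (m+1) - Real.log m) :=
                  mul_le_mul_of_nonneg_left hgap hc0
          linarith
      _ ≤ 4 * ∫ x in I m, g x := by linarith
  -- reduce to the sum over m ≥ 2
  set s' := s.filter (fun m => 2 ≤ m) with hs'
  have hzero : ∀ m ∈ s, m ∉ s' → Real.log m ^ n / (m : ℝ) ^ 2 = 0 := by
    intro m hm hm'
    have : ¬ 2 ≤ m := by simpa [hs', hm] using hm'
    interval_cases m <;> simp [Real.log_one, zero_pow (by omega : n ≠ 0)]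
  have hsum_eq : ∑ m ∈ s, Real.log m ^ n / (m : ℝ) ^ 2
      = ∑ m ∈ s', Real.log m ^ n / (m : ℝ) ^ 2 :=
    (Finset.sum_subset (Finset.filter_subset _ _) hzero).symm
  have hmem : ∀ m ∈ s', 2 ≤ m := fun m hm => (Finset.mem_filter.mp hm).2
  -- disjointness
  have hdisj : (↑s' : Set ℕ).Pairwise (Function.onFun Disjoint I) := by
    intro a ha b hb hab
    have ha2 := hmem a (by exact_mod_cast ha)
    have hb2 := hmem b (by exact_mod_cast hb)
    rcases hab.lt_or_gt with h | h
    · rw [Function.onFun, Set.Ioc_disjoint_Ioc]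
      refine le_trans (min_le_left _ _) (le_trans ?_ (le_max_right _ _))
      apply Real.log_le_log (by positivity)
      push_cast; exact_mod_cast Nat.succ_le_of_lt h
    · rw [Function.onFun, Set.Ioc_disjoint_Ioc]
      refine le_trans (min_le_right _ _) (le_trans ?_ (le_max_left _ _))
      apply Real.log_le_log (by positivity)
      push_cast; exact_mod_cast Nat.succ_le_of_lt h
  have hint' : ∀ m ∈ s', IntegrableOn g (I m) := fun m hm =>
    (integrableOn_gamma n).mono_set (hIsub m (hmem m hm))
  have hbiu : ∑ m ∈ s', ∫ x in I m, g x = ∫ x in ⋃ m ∈ s', I m, g x :=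
    (integral_biUnion_finset s' (fun m _ => measurableSet_Ioc) hdisj hint').symm
  have hunion_sub : (⋃ m ∈ s', I m) ⊆ Ioi (0:ℝ) := by
    intro x hx
    simp only [Set.mem_iUnion] at hx
    obtain ⟨m, hm, hxm⟩ := hx
    exact hIsub m (hmem m hm) hxm
  have hmono : ∫ x in ⋃ m ∈ s', I m, g x ≤ ∫ x in Ioi (0:ℝ), g x := by
    refine setIntegral_mono_set (integrableOn_gamma n) ?_ (hunion_sub.eventuallyLE)
    filter_upwards [ae_restrict_mem measurableSet_Ioi] with x hx
    have : (0:ℝ) < x := hx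
    positivity
  calc ∑ m ∈ s, Real.log m ^ n / (m : ℝ) ^ 2
      = ∑ m ∈ s', Real.log m ^ n / (m : ℝ) ^ 2 := hsum_eq
    _ ≤ ∑ m ∈ s', 4 * ∫ x in I m, g x :=
        Finset.sum_le_sum fun m hm => key m (hmem m hm)
    _ = 4 * ∑ m ∈ s', ∫ x in I m, g x := by rw [Finset.mul_sum]
    _ = 4 * ∫ x in ⋃ m ∈ s', I m, g x := by rw [hbiu]
    _ ≤ 4 * ∫ x in Ioi (0:ℝ), g x := by linarith
    _ = 4 * (n.factorial : ℝ) := by rw [integral_gamma n]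

/-- There is an absolute constant `C > 0` such that for every positive integer `k`,
`M_k := Σ_{m ≥ 1} Λ_k(m)² / m² ≤ C · (2k)!`. -/
theorem stmt_15 :
    ∃ C : ℝ, 0 < C ∧ ∀ k : ℕ, 0 < k →
      (∑' m : ℕ, (Lam k m) ^ 2 / (m : ℝ) ^ 2) ≤ C * Nat.factorial (2 * k) := by
  refine ⟨4, by norm_num, fun k hk => ?_⟩
  have hb : (0:ℝ) ≤ 4 * ((2 * k).factorial : ℝ) := by positivity
  refine tsum_le_of_sum_le' hb fun s => ?_
  calc ∑ m ∈ s, Lam k m ^ 2 / (m : ℝ) ^ 2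
      ≤ ∑ m ∈ s, Real.log m ^ (2 * k) / (m : ℝ) ^ 2 := by
        refine Finset.sum_le_sum fun m _ => ?_
        rcases Nat.eq_zero_or_pos m with rfl | hm
        · simp [Lam, ArithmeticFunction.map_zero]
        · have h1 : Lam k m ≤ Real.log m ^ k := Lam_le k m hm
          have h2 : Lam k m ^ 2 ≤ (Real.log m ^ k) ^ 2 :=
            pow_le_pow_left₀ (Lam_nonneg k m) h1 2
          have h3 : (Real.log m ^ k) ^ 2 = Real.log m ^ (2 * k) := by
            rw [← pow_mul, mul_comm]
          exact div_le_div_of_nonneg_right (h3 ▸ h2) (by positivity) |>.trans_eq rfl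
    _ ≤ 4 * ((2 * k).factorial : ℝ) := log_sum_bound (2 * k) (by omega) s
end
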